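/- arXiv:1610.03288 — 2 statements merged into one kernel-verified Lean document; each statement's English description precedes it below -/
import Mathlib

section
/- Let k ≥ 1 and let X ⊆ K be a subset of the Klein bottle K of cardinality k, and set X̃ := π⁻¹(X) ⊆ T. Let f be a homeomorphism of K with f(X) = X, and suppose there exists a homeomorphism f̃ of T with π ∘ f̃ = f ∘ π, f̃(X̃) = X̃, such that f̃ is isotopic to the identity of T rel X̃. Then f fixes X pointwise, i.e. f(x) = x for every x ∈ X. (This is the claim that the kernel of φ_k : MCG(K; k) → MCG(T; 2k) is contained in the pure mapping class group PMCG(K; k).) -/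
noncomputable section

/-- The torus `T = (ℝ/ℤ) × (ℝ/ℤ)`. -/
abbrev Torus : Type := AddCircle (1:ℝ) × AddCircle (1:ℝ)

/-- The free involution `J'(x,y) = (x + 1/2, -y)` of the torus. -/
def kleinInvol : Torus → Torus := fun p => (p.1 + ((1/2 : ℝ) : AddCircle (1:ℝ)), -p.2)

/-- The relation identifying `p` with `J' p`. -/
def KleinRel : Torus → Torus → Prop := fun a b => b = a ∨ b = kleinInvol a

/-- The Klein bottle, as the quotient of the torus by the involution `J'`. -/
abbrev KleinBottle : Type := Quot KleinRel

/-- The orientation double covering `π : T → K`. -/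
def kleinProj : Torus → KleinBottle := Quot.mk KleinRel

/-- Two self-homeomorphisms `f, g` of `M` are isotopic rel a finite set `X` if there is a
continuous map `H : M × [0,1] → M` with `H(·,0) = f`, `H(·,1) = g`, and each `H(·,t)` a
homeomorphism of `M` mapping `X` onto `X`. -/
def IsotopyRel {M : Type*} [TopologicalSpace M] (f g : Homeomorph M M) (X : Set M) : Prop :=
  ∃ H : C(M × unitInterval, M),
    (∀ m, H (m, 0) = f m) ∧ (∀ m, H (m, 1) = g m) ∧
    (∀ t : unitInterval, ∃ h : Homeomorph M M, (∀ m, H (m, t) = h m) ∧ h '' X = X)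

lemma kleinInvol_invol (p : Torus) : kleinInvol (kleinInvol p) = p := by
  unfold kleinInvol
  have h : ((1/2 : ℝ) : AddCircle (1:ℝ)) + ((1/2 : ℝ) : AddCircle (1:ℝ)) = 0 := by
    have h2 : (1/2 : ℝ) + 1/2 = 1 := by norm_num
    rw [← AddCircle.coe_add, h2]
    exact AddCircle.coe_period 1
  simp only [neg_neg]
  rw [add_assoc, h, add_zero]

lemma kleinRel_symm {a b : Torus} (h : KleinRel a b) : KleinRel b a := by
  rcases h with h | h
  · exact Or.inl h.symm
  · exact Or.inr (by rw [h, kleinInvol_invol])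

lemma kleinRel_trans {a b c : Torus} (h1 : KleinRel a b) (h2 : KleinRel b c) : KleinRel a c := by
  rcases h1 with h1 | h1 <;> rcases h2 with h2 | h2 <;> subst h1 <;> subst h2 <;>
    simp [KleinRel, kleinInvol_invol]

lemma kleinProj_eq_iff {a b : Torus} : kleinProj a = kleinProj b ↔ KleinRel a b := by
  constructor
  · intro h
    have h2 : Relation.EqvGen KleinRel a b :=
      Quot.eq.mp (show Quot.mk KleinRel a = Quot.mk KleinRel b from h)
    clear h
    induction h2 with
    | rel x y h => exact h
    | refl x => exact Or.inl rfl
    | symm x y _ ih => exact kleinRel_symm ih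
    | trans x y z _ _ ih1 ih2 => exact kleinRel_trans ih1 ih2
  · intro h
    exact Quot.sound h

/-- If a homeomorphism `f` of the Klein bottle preserving a `k`-point set `X` admits a lift
`f̃` to the torus preserving `X̃ = π⁻¹(X)` that is isotopic to the identity rel `X̃`, then
`f` fixes `X` pointwise. -/
theorem klein_mcg_lift_kernel_pure (k : ℕ) (hk : 1 ≤ k) (X : Set KleinBottle)
    (hXfin : X.Finite) (hXcard : X.ncard = k)
    (f : Homeomorph KleinBottle KleinBottle) (hfX : f '' X = X)
    (ftil : Homeomorph Torus Torus)
    (hlift : ∀ p : Torus, kleinProj (ftil p) = f (kleinProj p))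
    (hftilX : ftil '' (kleinProj ⁻¹' X) = kleinProj ⁻¹' X)
    (hisot : IsotopyRel ftil (Homeomorph.refl Torus) (kleinProj ⁻¹' X)) :
    ∀ x ∈ X, f x = x := by
  -- X̃ is finite
  have hfib : ∀ x : KleinBottle, (kleinProj ⁻¹' {x}).Finite := by
    intro x
    obtain ⟨p, rfl⟩ := Quot.exists_rep x
    apply Set.Finite.subset ((Set.finite_singleton (kleinInvol p)).insert p)
    intro q hq
    have : KleinRel q p := kleinProj_eq_iff.mp hq
    rcases kleinRel_symm this with h | h
    · exact Or.inl h
    · exact Or.inr h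
  have hXt : (kleinProj ⁻¹' X).Finite := by
    have : kleinProj ⁻¹' X = ⋃ x ∈ X, kleinProj ⁻¹' {x} := by
      ext q; simp
    rw [this]
    exact hXfin.biUnion (fun x _ => hfib x)
  haveI : Finite ↥(kleinProj ⁻¹' X) := hXt.to_subtype
  haveI : DiscreteTopology ↥(kleinProj ⁻¹' X) := Finite.instDiscreteTopology
  intro x hx
  obtain ⟨p, rfl⟩ := Quot.exists_rep x
  have hp : p ∈ kleinProj ⁻¹' X := hx
  obtain ⟨H, h0, h1, hh⟩ := hisot
  -- the path t ↦ H (p, t) stays in X̃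
  have hmem : ∀ t : unitInterval, H (p, t) ∈ kleinProj ⁻¹' X := by
    intro t
    obtain ⟨h, hHt, hhX⟩ := hh t
    rw [hHt]
    rw [← hhX]
    exact Set.mem_image_of_mem h hp
  have hcont : Continuous (fun t : unitInterval => H (p, t)) :=
    H.continuous.comp (Continuous.prodMk_right p)
  have hconst : H (p, 0) = H (p, 1) :=
    IsPreconnected.constant_of_mapsTo (isPreconnected_univ) hXt.isDiscrete
      hcont.continuousOn (fun t _ => hmem t) (Set.mem_univ 0) (Set.mem_univ 1)
  have hfix : ftil p = p := by
    rw [← h0 p, hconst, h1 p]; rfl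
  have := hlift p
  rw [hfix] at this
  exact ((this).symm : f (Quot.mk KleinRel p) = Quot.mk KleinRel p)
end
end

section
/- There exist a homeomorphism h of the Klein bottle K and a homeomorphism h̃ of the torus T with π ∘ h̃ = h ∘ π, such that h̃ is isotopic to the identity of T (through homeomorphisms) but h is not isotopic to the identity of K (through homeomorphisms). (This expresses the non-injectivity of the homomorphism φ : MCG(K) → MCG(T) induced by the orientation double covering, i.e. the failure of the Birman–Chillingworth embedding in genus 2.) -/
noncomputable section

/-- Two self-homeomorphisms `f, g` of `M` are isotopic if there is a continuous map
`H : M × [0,1] → M` with `H(·,0) = f`, `H(·,1) = g`, and each `H(·,t)` a homeomorphism. -/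
def Isotopic {M : Type*} [TopologicalSpace M] (f g : Homeomorph M M) : Prop :=
  ∃ H : C(M × unitInterval, M),
    (∀ m, H (m, 0) = f m) ∧ (∀ m, H (m, 1) = g m) ∧
    (∀ t : unitInterval, ∃ h : Homeomorph M M, ∀ m, H (m, t) = h m)

namespace KleinAux
open Complex Real

/-- the basic character of the circle -/
def e₁ : AddCircle (1:ℝ) → ℂ := fun a => ((AddCircle.toCircle a : Circle) : ℂ)

lemma e₁_cont : Continuous e₁ :=
  continuous_subtype_val.comp AddCircle.continuous_toCircle

lemma e₁_abs (a : AddCircle (1:ℝ)) : ‖e₁ a‖ = 1 := Circle.norm_coe _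

lemma e₁_add (a b : AddCircle (1:ℝ)) : e₁ (a + b) = e₁ a * e₁ b := by
  rw [e₁, AddCircle.toCircle_add]; rfl

lemma e₁_zero : e₁ 0 = 1 := by rw [e₁, AddCircle.toCircle_zero]; rfl

lemma e₁_neg (a : AddCircle (1:ℝ)) : e₁ (-a) = (starRingEnd ℂ) (e₁ a) := by
  have h1 : AddCircle.toCircle (-a) = (AddCircle.toCircle a)⁻¹ := by
    apply eq_inv_of_mul_eq_one_right
    rw [← AddCircle.toCircle_add]
    simp [AddCircle.toCircle_zero]
  rw [e₁, h1, Circle.coe_inv_eq_conj]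
  rfl

lemma e₁_coe (r : ℝ) : e₁ ((r : ℝ) : AddCircle (1:ℝ)) = Complex.exp ((r:ℂ) * (2 * π * Complex.I)) := by
  rw [e₁, AddCircle.toCircle_apply_mk, Circle.coe_exp]
  congr 1
  push_cast
  ring

lemma e₁_half : e₁ (((1/2 : ℝ) : AddCircle (1:ℝ))) = -1 := by
  rw [e₁_coe]
  have : ((1/2 : ℝ) : ℂ) * (2 * π * Complex.I) = π * Complex.I := by push_cast; ring
  rw [this, Complex.exp_pi_mul_I]

lemma e₁_mul_conj (a : AddCircle (1:ℝ)) : e₁ a * (starRingEnd ℂ) (e₁ a) = 1 := by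
  rw [Complex.mul_conj, ← Complex.sq_norm, e₁_abs]
  norm_num

def half : AddCircle (1:ℝ) := ((1/2 : ℝ) : AddCircle (1:ℝ))

lemma e₁_half' : e₁ half = -1 := e₁_half

lemma half_add_half : half + half = 0 := by
  rw [half, ← AddCircle.coe_add]
  have h : (1/2 + 1/2 : ℝ) = 1 := by norm_num
  rw [h]
  exact AddCircle.coe_period (p := (1:ℝ))

lemma neg_half : -half = half := by
  rw [neg_eq_of_add_eq_zero_left half_add_half]

/-- the lift of the Klein homeomorphism: translation by `half` in the second factor. -/
def Th : Homeomorph Torus Torus :=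
  (Homeomorph.refl (AddCircle (1:ℝ))).prodCongr (Homeomorph.addRight half)

lemma Th_apply (p : Torus) : Th p = (p.1, p.2 + half) := rfl

lemma Th_invol (p : Torus) : Th (kleinInvol p) = kleinInvol (Th p) := by
  simp only [Th_apply, kleinInvol]
  refine Prod.ext rfl ?_
  simp only
  rw [show -(p.2 + half) = -p.2 + (-half) by abel, neg_half]

lemma proj_invol (p : Torus) : kleinProj (kleinInvol p) = kleinProj p :=
  (Quot.sound (r := KleinRel) (Or.inr rfl)).symm

lemma hrelTh : ∀ a b, KleinRel a b → kleinProj (Th a) = kleinProj (Th b) := by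
  intro a b hab
  rcases hab with h | h
  · rw [h]
  · rw [h, Th_invol, proj_invol]

/-- the Klein bottle homeomorphism -/
def Kh : Homeomorph KleinBottle KleinBottle where
  toFun := Quot.lift (fun p => kleinProj (Th p)) hrelTh
  invFun := Quot.lift (fun p => kleinProj (Th p)) hrelTh
  left_inv := by
    apply Quot.ind
    intro p
    show kleinProj (Th (Th p)) = kleinProj p
    congr 1
    rw [Th_apply, Th_apply]
    refine Prod.ext rfl ?_
    show p.2 + half + half = p.2
    rw [add_assoc, half_add_half, add_zero]
  right_inv := by
    apply Quot.ind
    intro p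
    show kleinProj (Th (Th p)) = kleinProj p
    congr 1
    rw [Th_apply, Th_apply]
    refine Prod.ext rfl ?_
    show p.2 + half + half = p.2
    rw [add_assoc, half_add_half, add_zero]
  continuous_toFun := by
    apply continuous_quot_lift
    exact (continuous_quot_mk.comp Th.continuous)
  continuous_invFun := by
    apply continuous_quot_lift
    exact (continuous_quot_mk.comp Th.continuous)

lemma Kh_proj (p : Torus) : kleinProj (Th p) = Kh (kleinProj p) := rfl

/-- isotopy upstairs -/
lemma Th_isotopic : Isotopic Th (Homeomorph.refl Torus) := by
  refine ⟨⟨fun q => (q.1.1, q.1.2 + (((1 - (q.2:ℝ)) / 2 : ℝ) : AddCircle (1:ℝ))), ?_⟩, ?_, ?_, ?_⟩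
  · apply Continuous.prodMk (continuous_fst.comp continuous_fst)
    apply Continuous.add (continuous_snd.comp continuous_fst)
    exact (AddCircle.continuous_mk' (1:ℝ)).comp
      ((continuous_const.sub (continuous_subtype_val.comp continuous_snd)).div_const 2)
  · intro m
    show (m.1, m.2 + _) = Th m
    rw [Th_apply]
    refine Prod.ext rfl ?_
    show m.2 + (((1 - ((0:unitInterval):ℝ)) / 2 : ℝ) : AddCircle (1:ℝ)) = m.2 + half
    norm_num
    rfl
  · intro m
    show (m.1, m.2 + _) = m
    refine Prod.ext rfl ?_
    show m.2 + (((1 - ((1:unitInterval):ℝ)) / 2 : ℝ) : AddCircle (1:ℝ)) = m.2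
    norm_num
  · intro t
    refine ⟨(Homeomorph.refl (AddCircle (1:ℝ))).prodCongr
      (Homeomorph.addRight (((1 - (t:ℝ)) / 2 : ℝ) : AddCircle (1:ℝ))), fun m => rfl⟩



lemma int_cast_eq_of_dist_lt {k l : ℤ} (h : |(k:ℝ) - l| < 1) : k = l := by
  have h2 : |((k - l : ℤ) : ℝ)| < 1 := by push_cast; exact h
  have h3 : |k - l| < 1 := by exact_mod_cast h2
  rw [abs_lt] at h3
  omega

/-- A continuous real-valued function taking integer values on a preconnected space
is constant. -/
lemma intval_const {X : Type*} [TopologicalSpace X] [PreconnectedSpace X] {g : X → ℝ}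
    (hg : Continuous g) (hint : ∀ x, ∃ k : ℤ, g x = k) (a b : X) : g a = g b := by
  have hclopen : IsClopen {x | g x = g b} := by
    constructor
    · exact isClosed_eq hg continuous_const
    · rw [isOpen_iff_mem_nhds]
      intro x hx
      have h1 : g ⁻¹' Metric.ball (g x) 1 ∈ nhds x :=
        hg.continuousAt.preimage_mem_nhds (Metric.ball_mem_nhds _ one_pos)
      filter_upwards [h1] with y hy
      obtain ⟨k, hk⟩ := hint y
      obtain ⟨l, hl⟩ := hint x
      have : |(k:ℝ) - l| < 1 := by
        have := hy
        simp only [Set.mem_preimage, Metric.mem_ball, Real.dist_eq, hk, hl] at this ⊢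
        exact this
      have hkl := int_cast_eq_of_dist_lt this
      simp only [Set.mem_setOf_eq] at hx ⊢
      rw [hk, hkl, ← hl, hx]
  have := hclopen.eq_univ ⟨b, rfl⟩
  have ha : a ∈ {x | g x = g b} := this ▸ Set.mem_univ a
  exact ha

lemma min_abs_sub_le {t a b : ℝ} (hba : b ≤ a) : |min t a - min t b| ≤ a - b := by
  rcases le_total t b with h | h
  · simp [min_eq_left h, min_eq_left (h.trans hba), sub_nonneg.mpr hba]
  · rcases le_total t a with h' | h'
    · rw [min_eq_left h', min_eq_right h, _root_.abs_of_nonneg (by linarith)]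
      linarith
    · rw [min_eq_right h', min_eq_right h, _root_.abs_of_nonneg (by linarith)]



lemma min_abs_sub_le_dup2 {t a b : ℝ} (hba : b ≤ a) : |min t a - min t b| ≤ a - b := by
  rcases le_total t b with h | h
  · simp [min_eq_left h, min_eq_left (h.trans hba), sub_nonneg.mpr hba]
  · rcases le_total t a with h' | h'
    · rw [min_eq_left h', min_eq_right h, _root_.abs_of_nonneg (by linarith)]
      linarith
    · rw [min_eq_right h', min_eq_right h, _root_.abs_of_nonneg (by linarith)]

/-- Homotopy lifting along `exp(2πi ·) : ℝ → S¹`, by hand via telescoping. -/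
lemma liftExists (f : ℝ × unitInterval → ℂ) (hf : Continuous f)
    (habs : ∀ p, ‖f p‖ = 1)
    (hper : ∀ x t, f (x + 1, t) = f (x, t))
    (g₀ : ℝ → ℝ) (hg₀ : Continuous g₀)
    (h₀ : ∀ x, f (x, 0) = Complex.exp ((g₀ x : ℂ) * (2 * π * Complex.I))) :
    ∃ F : ℝ × unitInterval → ℝ, Continuous F ∧
      (∀ p, Complex.exp ((F p : ℂ) * (2 * π * Complex.I)) = f p) ∧
      (∀ x, F (x, 0) = g₀ x) := by
  have hne : ∀ p, f p ≠ 0 := by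
    intro p hp
    have := habs p
    rw [hp] at this
    simp at this
  have hone : ∀ p, f p * (starRingEnd ℂ) (f p) = 1 := by
    intro p
    rw [Complex.mul_conj, ← Complex.sq_norm, habs]
    norm_num
  -- uniform continuity on a fundamental domain
  obtain ⟨δ, hδpos, hδ⟩ : ∃ δ > 0, ∀ p ∈ (Set.Icc (0:ℝ) 1 ×ˢ (Set.univ : Set unitInterval)),
      ∀ q ∈ (Set.Icc (0:ℝ) 1 ×ˢ (Set.univ : Set unitInterval)),
      dist p q < δ → dist (f p) (f q) < 1 := by
    have hK : IsCompact (Set.Icc (0:ℝ) 1 ×ˢ (Set.univ : Set unitInterval)) :=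
      isCompact_Icc.prod isCompact_univ
    have := hK.uniformContinuousOn_of_continuous hf.continuousOn
    exact Metric.uniformContinuousOn_iff.mp this 1 one_pos
  obtain ⟨n, hn⟩ := exists_nat_one_div_lt hδpos
  set N : ℕ := n + 1 with hN
  have hNpos : (0:ℝ) < N := by positivity
  -- key small-step estimate
  have key : ∀ (x : ℝ) (s t : unitInterval), |(s:ℝ) - t| ≤ 1 / N →
      dist (f (x, s)) (f (x, t)) < 1 := by
    intro x s t hst
    have hp : ∀ u : unitInterval, Function.Periodic (fun y => f (y, u)) 1 :=
      fun u y => hper y u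
    have hfr : ∀ u : unitInterval, f (Int.fract x, u) = f (x, u) := by
      intro u
      have := (hp u).sub_int_mul_eq (x := x) ⌊x⌋
      rwa [mul_one, Int.self_sub_floor] at this
    rw [← hfr s, ← hfr t]
    have hmem : (Int.fract x, s) ∈ Set.Icc (0:ℝ) 1 ×ˢ (Set.univ : Set unitInterval) :=
      ⟨⟨Int.fract_nonneg x, (Int.fract_lt_one x).le⟩, trivial⟩
    have hmem' : (Int.fract x, t) ∈ Set.Icc (0:ℝ) 1 ×ˢ (Set.univ : Set unitInterval) :=
      ⟨⟨Int.fract_nonneg x, (Int.fract_lt_one x).le⟩, trivial⟩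
    apply hδ _ hmem _ hmem'
    calc dist ((Int.fract x, s) : ℝ × unitInterval) (Int.fract x, t)
        = dist s t := by rw [Prod.dist_eq]; simp [dist_nonneg]
      _ = |(s:ℝ) - t| := by rw [Subtype.dist_eq, Real.dist_eq]
      _ ≤ 1 / N := hst
      _ < δ := by rw [hN]; push_cast; exact hn
  -- the subdivision points
  have hc_mem : ∀ k : ℕ, 0 ≤ min ((k:ℝ)/N) 1 ∧ min ((k:ℝ)/N) 1 ≤ 1 :=
    fun k => ⟨le_min (by positivity) zero_le_one, min_le_right _ _⟩
  set τ : ℕ → unitInterval → unitInterval := fun k t =>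
    ⟨min (t:ℝ) (min ((k:ℝ)/N) 1),
      le_min t.2.1 (hc_mem k).1, min_le_of_left_le t.2.2⟩ with hτ
  have hτ0 : ∀ t, τ 0 t = 0 := by
    intro t
    apply Subtype.ext
    simp [hτ, min_eq_right t.2.1]
  have hτN : ∀ t, τ N t = t := by
    intro t
    apply Subtype.ext
    have h1 : ((N:ℝ))/N = 1 := div_self (ne_of_gt hNpos)
    simp [hτ, h1, min_eq_left t.2.2]
  have hτzero : ∀ k, τ k 0 = 0 := by
    intro k
    apply Subtype.ext
    simp only [hτ]
    exact min_eq_left (by exact (hc_mem k).1)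
  have hτgap : ∀ (k : ℕ) (t : unitInterval), |((τ (k+1) t : ℝ)) - (τ k t : ℝ)| ≤ 1 / N := by
    intro k t
    have hba : min ((k:ℝ)/N) 1 ≤ min (((k:ℝ)+1)/N) 1 := by
      apply min_le_min _ le_rfl
      gcongr
      linarith
    have h1 := min_abs_sub_le_dup2 (t := (t:ℝ)) hba
    have h2 : min (((k:ℝ)+1)/N) 1 - min ((k:ℝ)/N) 1 ≤ 1/N := by
      have h3 : min (((k:ℝ)+1)/N) 1 ≤ ((k:ℝ)+1)/N := min_le_left _ _
      have h4 : (k:ℝ)/N ≤ min ((k:ℝ)/N) 1 ∨ (1:ℝ) ≤ min ((k:ℝ)/N) 1 := by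
        rcases le_total ((k:ℝ)/N) 1 with h | h
        · exact Or.inl (le_of_eq (min_eq_left h).symm)
        · exact Or.inr (le_of_eq (min_eq_right h).symm)
      rcases h4 with h4 | h4
      · have : ((k:ℝ)+1)/N - (k:ℝ)/N = 1/N := by ring
        linarith
      · have h5 : min (((k:ℝ)+1)/N) 1 ≤ 1 := min_le_right _ _
        have : (0:ℝ) ≤ 1/N := by positivity
        linarith
    have : ((τ (k+1) t : ℝ)) - (τ k t : ℝ)
        = min (t:ℝ) (min (((k:ℝ)+1)/N) 1) - min (t:ℝ) (min ((k:ℝ)/N) 1) := by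
      simp [hτ]
    rw [this]
    calc |min (t:ℝ) (min (((k:ℝ)+1)/N) 1) - min (t:ℝ) (min ((k:ℝ)/N) 1)|
        ≤ min (((k:ℝ)+1)/N) 1 - min ((k:ℝ)/N) 1 := min_abs_sub_le_dup2 hba
      _ ≤ 1/N := h2
  -- the incremental rotations
  set q : ℕ → ℝ × unitInterval → ℂ := fun k p =>
    f (p.1, τ (k+1) p.2) * (starRingEnd ℂ) (f (p.1, τ k p.2)) with hq
  have hqabs : ∀ k p, ‖q k p‖ = 1 := by
    intro k p
    simp [hq, map_mul, habs]
  have hqre : ∀ k p, (1:ℝ)/2 < (q k p).re := by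
    intro k p
    have hd := key p.1 (τ (k+1) p.2) (τ k p.2) (hτgap k p.2)
    have hns := Complex.normSq_sub (f (p.1, τ (k+1) p.2)) (f (p.1, τ k p.2))
    have h1 : Complex.normSq (f (p.1, τ (k+1) p.2)) = 1 := by
      rw [← Complex.sq_norm, habs]; norm_num
    have h2 : Complex.normSq (f (p.1, τ k p.2)) = 1 := by
      rw [← Complex.sq_norm, habs]; norm_num
    have h3 : Complex.normSq (f (p.1, τ (k+1) p.2) - f (p.1, τ k p.2)) < 1 := by
      rw [← Complex.sq_norm, ← Complex.dist_eq]
      have h4 : (0:ℝ) ≤ dist (f (p.1, τ (k+1) p.2)) (f (p.1, τ k p.2)) := dist_nonneg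
      nlinarith
    rw [h1, h2] at hns
    have : (q k p).re = (f (p.1, τ (k+1) p.2) * (starRingEnd ℂ) (f (p.1, τ k p.2))).re := by
      rw [hq]
    rw [this]
    nlinarith
  have hqne : ∀ k p, q k p ∈ Complex.slitPlane := by
    intro k p
    exact Or.inl (lt_trans (by norm_num) (hqre k p))
  -- telescoping product
  have hprod : ∀ (m : ℕ) (p : ℝ × unitInterval),
      (∏ k ∈ Finset.range m, q k p)
        = f (p.1, τ m p.2) * (starRingEnd ℂ) (f (p.1, τ 0 p.2)) := by
    intro m p
    induction m with
    | zero => simp [hone]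
    | succ m ih =>
      rw [Finset.prod_range_succ, ih, hq]
      have huni : f (p.1, τ m p.2) * (starRingEnd ℂ) (f (p.1, τ m p.2)) = 1 := hone _
      calc f (p.1, τ m p.2) * (starRingEnd ℂ) (f (p.1, τ 0 p.2)) *
            (f (p.1, τ (m+1) p.2) * (starRingEnd ℂ) (f (p.1, τ m p.2)))
          = f (p.1, τ (m+1) p.2) * (starRingEnd ℂ) (f (p.1, τ 0 p.2)) *
            (f (p.1, τ m p.2) * (starRingEnd ℂ) (f (p.1, τ m p.2))) := by ring
        _ = f (p.1, τ (m+1) p.2) * (starRingEnd ℂ) (f (p.1, τ 0 p.2)) := by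
            rw [huni, mul_one]
  -- the lift
  refine ⟨fun p => g₀ p.1 + (2*π)⁻¹ * ∑ k ∈ Finset.range N, (q k p).arg, ?_, ?_, ?_⟩
  · apply Continuous.add (hg₀.comp continuous_fst)
    apply Continuous.mul continuous_const
    apply continuous_finset_sum
    intro k _
    have hτcont : Continuous fun p : ℝ × unitInterval => τ k p.2 := by
      apply Continuous.subtype_mk
      exact (continuous_subtype_val.comp continuous_snd).min continuous_const
    have hτcont1 : Continuous fun p : ℝ × unitInterval => τ (k+1) p.2 := by
      apply Continuous.subtype_mk
      exact (continuous_subtype_val.comp continuous_snd).min continuous_const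
    have hqcont : Continuous (q k) := by
      apply Continuous.mul
      · exact hf.comp (continuous_fst.prodMk hτcont1)
      · exact Complex.continuous_conj.comp (hf.comp (continuous_fst.prodMk hτcont))
    rw [continuous_iff_continuousAt]
    intro p
    exact (Complex.continuousAt_arg (hqne k p)).comp hqcont.continuousAt
  · intro p
    have hsum : ((g₀ p.1 + (2*π)⁻¹ * ∑ k ∈ Finset.range N, (q k p).arg : ℝ) : ℂ)
          * (2 * (π:ℂ) * Complex.I)
        = (g₀ p.1 : ℂ) * (2 * (π:ℂ) * Complex.I)
          + ∑ k ∈ Finset.range N, ((q k p).arg : ℂ) * Complex.I := by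
      push_cast
      rw [add_mul]
      congr 1
      rw [mul_assoc, Finset.sum_mul, Finset.mul_sum]
      apply Finset.sum_congr rfl
      intro k _
      have hπ : ((π:ℂ)) ≠ 0 := by exact_mod_cast Real.pi_ne_zero
      field_simp
    rw [hsum, Complex.exp_add, Complex.exp_sum]
    have hargs : ∀ k ∈ Finset.range N, Complex.exp (((q k p).arg : ℂ) * Complex.I) = q k p := by
      intro k _
      have := Complex.norm_mul_exp_arg_mul_I (q k p)
      rwa [hqabs, Complex.ofReal_one, one_mul] at this
    rw [Finset.prod_congr rfl hargs, hprod N p, ← h₀ p.1]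
    have : f (p.1, τ 0 p.2) = f (p.1, 0) := by rw [hτ0]
    rw [this, hτN]
    calc f (p.1, 0) * (f (p.1, p.2) * (starRingEnd ℂ) (f (p.1, 0)))
        = f (p.1, p.2) * (f (p.1, 0) * (starRingEnd ℂ) (f (p.1, 0))) := by ring
      _ = f p := by rw [hone, mul_one]
  · intro x
    have hq0 : ∀ k, q k (x, 0) = 1 := by
      intro k
      rw [hq]
      simp only
      rw [hτzero, hτzero]
      exact hone _
    simp [hq0, Complex.arg_one]


/-- `w : K → ℂ`, `[x,y] ↦ e^{4πix}` -/
def Fw : KleinBottle → ℂ := Quot.lift (fun p : Torus => (e₁ p.1)^2) (by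
  intro a b hab
  rcases hab with h | h
  · rw [h]
  · rw [h]
    show (e₁ a.1)^2 = (e₁ (a.1 + ((1/2 : ℝ) : AddCircle (1:ℝ))))^2
    rw [e₁_add, mul_pow, e₁_half]
    norm_num)

/-- `[x,y] ↦ cos 2πy` -/
def Fc : KleinBottle → ℝ := Quot.lift (fun p : Torus => (e₁ p.2).re) (by
  intro a b hab
  rcases hab with h | h
  · rw [h]
  · rw [h]
    show (e₁ a.2).re = (e₁ (-a.2)).re
    rw [e₁_neg, Complex.conj_re])

/-- `[x,y] ↦ sin 2πy · e^{-2πix}` -/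
def Fg : KleinBottle → ℂ := Quot.lift
    (fun p : Torus => ((e₁ p.2).im : ℂ) * (starRingEnd ℂ) (e₁ p.1)) (by
  intro a b hab
  rcases hab with h | h
  · rw [h]
  · rw [h]
    show ((e₁ a.2).im : ℂ) * (starRingEnd ℂ) (e₁ a.1)
      = ((e₁ (-a.2)).im : ℂ) * (starRingEnd ℂ) (e₁ (a.1 + ((1/2 : ℝ) : AddCircle (1:ℝ))))
    rw [e₁_neg, e₁_add, e₁_half, map_mul, Complex.conj_im]
    have : (starRingEnd ℂ) (-1 : ℂ) = -1 := by simp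
    rw [this]
    push_cast
    ring)

lemma Fw_cont : Continuous Fw := continuous_quot_lift _ (by
  exact (e₁_cont.comp continuous_fst).pow 2)

lemma Fc_cont : Continuous Fc := continuous_quot_lift _ (by
  exact Complex.continuous_re.comp (e₁_cont.comp continuous_snd))

lemma Fg_cont : Continuous Fg := continuous_quot_lift _ (by
  apply Continuous.mul
  · exact Complex.continuous_ofReal.comp
      (Complex.continuous_im.comp (e₁_cont.comp continuous_snd))
  · exact Complex.continuous_conj.comp (e₁_cont.comp continuous_fst))

lemma Fw_proj (p : Torus) : Fw (kleinProj p) = (e₁ p.1)^2 := rfl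
lemma Fc_proj (p : Torus) : Fc (kleinProj p) = (e₁ p.2).re := rfl
lemma Fg_proj (p : Torus) :
    Fg (kleinProj p) = ((e₁ p.2).im : ℂ) * (starRingEnd ℂ) (e₁ p.1) := rfl

lemma two_pi_I_ne_zero' : (2 * (π:ℂ) * Complex.I) ≠ 0 := by
  simp [Real.pi_ne_zero, Complex.I_ne_zero]

lemma exp_two_pi_eq_one_int {r : ℝ}
    (h : Complex.exp ((r:ℂ) * (2 * (π:ℂ) * Complex.I)) = 1) : ∃ k : ℤ, r = k := by
  rw [Complex.exp_eq_one_iff] at h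
  obtain ⟨n, hn⟩ := h
  refine ⟨n, ?_⟩
  have h2 : (r : ℂ) = n := by
    have := mul_right_cancel₀ two_pi_I_ne_zero' (hn.trans (by ring))
    exact this
  exact_mod_cast h2

/-- The heart of the matter: the Klein bottle homeomorphism is not isotopic
(indeed not even homotopic) to the identity. -/
lemma Kh_not_isotopic : ¬ Isotopic Kh (Homeomorph.refl KleinBottle) := by
  rintro ⟨H, hH0, hH1, -⟩
  -- the track of the horizontal circle under the homotopy
  set ψ : ℝ × unitInterval → KleinBottle :=
    fun p => H (kleinProj (((p.1 : ℝ) : AddCircle (1:ℝ)), 0), p.2) with hψ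
  have hψcont : Continuous ψ := by
    apply H.continuous.comp
    apply Continuous.prodMk _ continuous_snd
    exact continuous_quot_mk.comp
      (((AddCircle.continuous_mk' (1:ℝ)).comp continuous_fst).prodMk continuous_const)
  have hψhalf : ∀ x (t : unitInterval), ψ (x + 1/2, t) = ψ (x, t) := by
    intro x t
    have hpt : (((x + 1/2 : ℝ) : AddCircle (1:ℝ)), (0 : AddCircle (1:ℝ)))
        = kleinInvol (((x:ℝ) : AddCircle (1:ℝ)), 0) := by
      rw [kleinInvol]
      refine Prod.ext ?_ ?_
      · show ((x + 1/2 : ℝ) : AddCircle (1:ℝ)) = ((x:ℝ) : AddCircle (1:ℝ)) + _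
        exact AddCircle.coe_add 1 x (1/2)
      · show (0 : AddCircle (1:ℝ)) = -0
        simp
    show H (kleinProj (((x + 1/2 : ℝ) : AddCircle (1:ℝ)), 0), t) = _
    rw [hpt, proj_invol]
  have hψper : ∀ x (t : unitInterval), ψ (x + 1, t) = ψ (x, t) := by
    intro x t
    rw [show x + 1 = x + 1/2 + 1/2 by ring, hψhalf, hψhalf]
  have hψ0 : ∀ x : ℝ, ψ (x, 0) = kleinProj (((x:ℝ) : AddCircle (1:ℝ)), half) := by
    intro x
    show H (kleinProj (((x:ℝ) : AddCircle (1:ℝ)), 0), 0) = _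
    rw [hH0, ← Kh_proj, Th_apply]
    show kleinProj (_, (0:AddCircle (1:ℝ)) + half) = _
    rw [zero_add]
  have hψ1 : ∀ x : ℝ, ψ (x, 1) = kleinProj (((x:ℝ) : AddCircle (1:ℝ)), 0) := by
    intro x
    show H (kleinProj (((x:ℝ) : AddCircle (1:ℝ)), 0), 1) = _
    rw [hH1]
    rfl
  -- lift of w ∘ ψ
  set fW : ℝ × unitInterval → ℂ := fun p => Fw (ψ p) with hfW
  have habsW : ∀ p, ‖fW p‖ = 1 := by
    intro p
    obtain ⟨q, hq⟩ := Quot.exists_rep (ψ p)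
    have hq' : kleinProj q = ψ p := hq
    rw [hfW]
    simp only
    rw [← hq', Fw_proj, norm_pow, e₁_abs, one_pow]
  have hperW : ∀ x (t : unitInterval), fW (x + 1, t) = fW (x, t) := by
    intro x t
    simp only [hfW, hψper]
  have h₀W : ∀ x : ℝ, fW (x, 0) = Complex.exp ((((fun y => 2*y) x : ℝ) : ℂ)
      * (2 * (π:ℂ) * Complex.I)) := by
    intro x
    simp only [hfW, hψ0, Fw_proj, e₁_coe]
    rw [sq, ← Complex.exp_add]
    congr 1
    push_cast
    ring
  obtain ⟨W, hWcont, hWexp, hW0⟩ := liftExists fW (Fw_cont.comp hψcont) habsW hperW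
    (fun y => 2*y) (by fun_prop) h₀W
  -- the square root ζ of w ∘ ψ
  set ζ : ℝ × unitInterval → ℂ := fun p => Complex.exp ((W p : ℂ) * ((π:ℂ) * Complex.I)) with hζ
  have hζcont : Continuous ζ :=
    Complex.continuous_exp.comp ((Complex.continuous_ofReal.comp hWcont).mul continuous_const)
  have hζsq : ∀ p, ζ p ^ 2 = fW p := by
    intro p
    rw [hζ]
    simp only
    rw [sq, ← Complex.exp_add, ← hWexp p]
    congr 1
    ring
  have hζne : ∀ p, ζ p ≠ 0 := fun p => Complex.exp_ne_zero _
  -- ζ flips sign under the half shift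
  set d : ℝ × unitInterval → ℝ := fun p => W (p.1 + 1/2, p.2) - W p with hd
  have hdint : ∀ p, ∃ k : ℤ, d p = k := by
    intro p
    apply exp_two_pi_eq_one_int
    rw [hd]
    simp only
    rw [Complex.ofReal_sub, sub_mul, Complex.exp_sub, hWexp, hWexp]
    rw [hfW]
    simp only
    rw [hψhalf]
    apply div_self
    intro hzero
    have := habsW p
    rw [hfW] at this
    simp only at this
    rw [hzero] at this
    simp at this
  have hdcont : Continuous d := (hWcont.comp ((continuous_fst.add continuous_const).prodMk
    continuous_snd)).sub hWcont
  have hdone : ∀ p, d p = 1 := by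
    intro p
    have hconst := intval_const hdcont hdint p (0, 0)
    rw [hconst, hd]
    simp only
    rw [hW0, hW0]
    norm_num
  have hζhalf : ∀ p : ℝ × unitInterval, ζ (p.1 + 1/2, p.2) = - ζ p := by
    intro p
    have hWh : W (p.1 + 1/2, p.2) = W p + 1 := by
      have := hdone p
      rw [hd] at this
      simp only at this
      linarith
    rw [hζ]
    simp only
    rw [hWh]
    push_cast
    rw [add_mul, Complex.exp_add, one_mul, Complex.exp_pi_mul_I]
    ring
  -- the function E = e^{2πiY}
  set E : ℝ × unitInterval → ℂ :=
    fun p => ((Fc (ψ p) : ℝ) : ℂ) + (((ζ p * Fg (ψ p)).re : ℝ) : ℂ) * Complex.I with hE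
  have hEcont : Continuous E := by
    apply Continuous.add
    · exact Complex.continuous_ofReal.comp (Fc_cont.comp hψcont)
    · apply Continuous.mul _ continuous_const
      exact Complex.continuous_ofReal.comp
        (Complex.continuous_re.comp (hζcont.mul (Fg_cont.comp hψcont)))
  -- pointwise structure of E
  have hEkey : ∀ p, ∃ q : Torus, kleinProj q = ψ p ∧
      (E p = e₁ q.2 ∨ E p = (starRingEnd ℂ) (e₁ q.2)) := by
    intro p
    obtain ⟨q, hq⟩ := Quot.exists_rep (ψ p)
    have hq' : kleinProj q = ψ p := hq
    refine ⟨q, hq', ?_⟩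
    have hfc : Fc (ψ p) = (e₁ q.2).re := by rw [← hq', Fc_proj]
    have hfg : Fg (ψ p) = ((e₁ q.2).im : ℂ) * (starRingEnd ℂ) (e₁ q.1) := by
      rw [← hq', Fg_proj]
    have hfw2 : fW p = (e₁ q.1)^2 := by
      rw [hfW]; simp only; rw [← hq', Fw_proj]
    have hzz : (ζ p - e₁ q.1) * (ζ p + e₁ q.1) = 0 := by
      have h2 := hζsq p
      rw [hfw2] at h2
      linear_combination h2
    rcases mul_eq_zero.mp hzz with h | h
    · left
      have hζq : ζ p = e₁ q.1 := sub_eq_zero.mp h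
      have hmm : ζ p * Fg (ψ p) = ((e₁ q.2).im : ℂ) := by
        rw [hζq, hfg]
        calc e₁ q.1 * (((e₁ q.2).im : ℂ) * (starRingEnd ℂ) (e₁ q.1))
            = ((e₁ q.2).im : ℂ) * (e₁ q.1 * (starRingEnd ℂ) (e₁ q.1)) := by ring
          _ = ((e₁ q.2).im : ℂ) := by rw [e₁_mul_conj, mul_one]
      rw [hE]
      simp only
      rw [hfc, hmm, Complex.ofReal_re]
      exact Complex.re_add_im _
    · right
      have hζq : ζ p = -e₁ q.1 := eq_neg_of_add_eq_zero_left h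
      have hmm : ζ p * Fg (ψ p) = -((e₁ q.2).im : ℂ) := by
        rw [hζq, hfg]
        calc -e₁ q.1 * (((e₁ q.2).im : ℂ) * (starRingEnd ℂ) (e₁ q.1))
            = -(((e₁ q.2).im : ℂ) * (e₁ q.1 * (starRingEnd ℂ) (e₁ q.1))) := by ring
          _ = -((e₁ q.2).im : ℂ) := by rw [e₁_mul_conj, mul_one]
      rw [hE]
      simp only
      rw [hfc, hmm]
      apply Complex.ext <;> simp
  have hEabs : ∀ p, ‖E p‖ = 1 := by
    intro p
    obtain ⟨q, -, h | h⟩ := hEkey p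
    · rw [h, e₁_abs]
    · rw [h, Complex.norm_conj, e₁_abs]
  have hEhalf : ∀ p : ℝ × unitInterval, E (p.1 + 1/2, p.2) = (starRingEnd ℂ) (E p) := by
    intro p
    rw [hE]
    simp only
    rw [hψhalf p.1 p.2, hζhalf p]
    apply Complex.ext <;> simp
  have hEper : ∀ x (t : unitInterval), E (x + 1, t) = E (x, t) := by
    intro x t
    rw [show x + 1 = x + 1/2 + 1/2 by ring]
    have h1 := hEhalf (x + 1/2, t)
    have h2 := hEhalf (x, t)
    simp only at h1 h2
    rw [h1, h2, Complex.conj_conj]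
  have hE0 : ∀ x : ℝ, E (x, 0)
      = Complex.exp ((((fun _ => (1/2:ℝ)) x : ℝ) : ℂ) * (2 * (π:ℂ) * Complex.I)) := by
    intro x
    have hrhs : Complex.exp ((((1:ℝ)/2 : ℝ) : ℂ) * (2 * (π:ℂ) * Complex.I)) = -1 := by
      rw [show (((1:ℝ)/2 : ℝ) : ℂ) * (2 * (π:ℂ) * Complex.I) = (π:ℂ) * Complex.I by push_cast; ring,
        Complex.exp_pi_mul_I]
    rw [hE]
    simp only
    rw [hψ0 x, Fc_proj, Fg_proj, e₁_half']
    simp only [Complex.neg_re, Complex.one_re, Complex.neg_im, Complex.one_im, neg_zero,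
      Complex.ofReal_zero, zero_mul, mul_zero, Complex.zero_re, add_zero]
    rw [hrhs]
    push_cast
    ring
  have hE1 : ∀ x : ℝ, E (x, 1) = 1 := by
    intro x
    rw [hE]
    simp only
    rw [hψ1 x, Fc_proj, Fg_proj, e₁_zero]
    simp
  -- lift E
  obtain ⟨Y, hYcont, hYexp, hY0⟩ := liftExists E hEcont hEabs hEper
    (fun _ => (1:ℝ)/2) continuous_const hE0
  set g : ℝ × unitInterval → ℝ := fun p => Y (p.1 + 1/2, p.2) + Y p with hg
  have hgcont : Continuous g := (hYcont.comp ((continuous_fst.add continuous_const).prodMk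
    continuous_snd)).add hYcont
  have hgint : ∀ p, ∃ k : ℤ, g p = k := by
    intro p
    apply exp_two_pi_eq_one_int
    rw [hg]
    simp only
    rw [Complex.ofReal_add, add_mul, Complex.exp_add, hYexp, hYexp]
    have h1 := hEhalf p
    rw [h1, mul_comm, Complex.mul_conj, ← Complex.sq_norm, hEabs]
    norm_num
  have hg00 : g (0, 0) = 1 := by
    rw [hg]
    simp only
    rw [show (0:ℝ) + 1/2 = 1/2 by norm_num, hY0, hY0]
    norm_num
  have hgany : ∀ p, g p = 1 := by
    intro p
    rw [← hg00]
    exact intval_const hgcont hgint p (0, 0)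
  have hyend : ∀ x : ℝ, ∃ k : ℤ, Y (x, 1) = k := by
    intro x
    apply exp_two_pi_eq_one_int
    rw [hYexp, hE1]
  have hyc : Continuous fun x : ℝ => Y (x, 1) :=
    hYcont.comp (continuous_id.prodMk continuous_const)
  have hyconst : Y ((0:ℝ) + 1/2, 1) = Y (0, 1) := intval_const hyc hyend _ _
  obtain ⟨k, hk⟩ := hyend 0
  have hfinal : (1:ℝ) = k + k := by
    have h1 := hgany (0, 1)
    rw [hg] at h1
    simp only at h1
    rw [hyconst, hk] at h1
    linarith
  have hfinalZ : (1:ℤ) = k + k := by exact_mod_cast hfinal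
  omega

end KleinAux

/-- Non-injectivity of `φ : MCG(K) → MCG(T)`: there is a homeomorphism of the Klein bottle,
not isotopic to the identity, admitting a lift to the torus that is isotopic to the
identity. -/
theorem klein_mcg_not_injective :
    ∃ (h : Homeomorph KleinBottle KleinBottle) (htil : Homeomorph Torus Torus),
      (∀ p : Torus, kleinProj (htil p) = h (kleinProj p)) ∧
      Isotopic htil (Homeomorph.refl Torus) ∧
      ¬ Isotopic h (Homeomorph.refl KleinBottle) := by
  exact ⟨KleinAux.Kh, KleinAux.Th, fun p => KleinAux.Kh_proj p,
    KleinAux.Th_isotopic, KleinAux.Kh_not_isotopic⟩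
end
end
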